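/- arXiv:2201.07401 — 5 statements merged into one kernel-verified Lean document; each statement's English description precedes it below -/
import Mathlib

section
/- Angle gap of the computational-lower-bound construction. Fix K ≥ 2 and t > 0, set e = (1, −1, 0) ∈ ℝ³, and define the order-K tensor S : [3]^K → ℝ by S(j₁,…,j_K) = 1 + t·∏_{k=1}^K e_{j_k}. Put u := (2/3)^{K−1}·t². Then the rows of Mat(S) satisfy cos(Mat(S)_{1:}, Mat(S)_{3:}) = (1+u)^{−1/2} and cos(Mat(S)_{1:}, Mat(S)_{2:}) = (1−u)/(1+u), the minimal pairwise distance between normalized rows is attained by the pair (1,3), and the angle gap satisfies Δ_min(S)² = 2 − 2(1+u)^{−1/2}; in particular u/(1+u) ≤ Δ_min(S)² and, whenever u ≤ 3, Δ_min(S)² ≤ u. -/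
open scoped BigOperators
open scoped Classical

noncomputable section

/-- Normalization `v^s := v/‖v‖`, with the convention `0^s = 0`. -/
def nzd {ι : Type*} [Fintype ι] (v : EuclideanSpace ℝ ι) : EuclideanSpace ℝ ι :=
  ‖v‖⁻¹ • v

/-- The `a`-th row of the mode-`k` matricization of an order-`K` tensor. -/
def matRow {K d : ℕ} (T : (Fin K → Fin d) → ℝ) (k : Fin K) (a : Fin d) :
    EuclideanSpace ℝ ({i : Fin K // i ≠ k} → Fin d) :=
  WithLp.toLp 2 (fun j => T fun i => if h : i = k then a else j ⟨i, h⟩)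

/-- Mean tensor of the symmetric order-`K` dTBM:
`X(i₁,…,i_K) = S(z(i₁),…,z(i_K)) · ∏_k θ(i_k)`. -/
def meanTensor {K p r : ℕ} (z : Fin p → Fin r) (S : (Fin K → Fin r) → ℝ)
    (θ : Fin p → ℝ) : (Fin K → Fin p) → ℝ :=
  fun i => S (fun k => z (i k)) * ∏ k, θ (i k)

/-- Parameter space `P` with constants `c₁, c₂, c₃, c₄` (mode-1 matricization rows
taken at the index `k0`). -/
def inP {K p r : ℕ} (k0 : Fin K) (c1 c2 c3 c4 : ℝ)
    (z : Fin p → Fin r) (S : (Fin K → Fin r) → ℝ) (θ : Fin p → ℝ) : Prop :=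
  (∀ i, 0 < θ i) ∧
  (∀ a : Fin r,
      c1 * p / r ≤ ((Finset.univ.filter (fun i => z i = a)).card : ℝ) ∧
      ((Finset.univ.filter (fun i => z i = a)).card : ℝ) ≤ c2 * p / r) ∧
  (∀ a : Fin r, c3 ≤ ‖matRow S k0 a‖ ∧ ‖matRow S k0 a‖ ≤ c4) ∧
  (∀ a : Fin r,
      ∑ i ∈ Finset.univ.filter (fun i => z i = a), θ i
        = ((Finset.univ.filter (fun i => z i = a)).card : ℝ))

/-- Angle gap `Δ_min(S) = min_{a ≠ b} ‖Mat(S)_{a:}^s − Mat(S)_{b:}^s‖`. -/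
def angleGap {K d : ℕ} (k0 : Fin K) (S : (Fin K → Fin d) → ℝ) : ℝ :=
  sInf {x | ∃ a b : Fin d, a ≠ b ∧ x = ‖nzd (matRow S k0 a) - nzd (matRow S k0 b)‖}

/-- Cosine of the angle between two vectors. -/
def cosAngle {ι : Type*} [Fintype ι] (v w : EuclideanSpace ℝ ι) : ℝ :=
  (@inner ℝ _ _ v w) / (‖v‖ * ‖w‖)

lemma nzd_dist_sq {ι : Type*} [Fintype ι] (v w : EuclideanSpace ℝ ι)
    (hv : v ≠ 0) (hw : w ≠ 0) :
    ‖nzd v - nzd w‖ ^ 2 = 2 - 2 * cosAngle v w := by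
  have hv' : ‖v‖ ≠ 0 := norm_ne_zero_iff.mpr hv
  have hw' : ‖w‖ ≠ 0 := norm_ne_zero_iff.mpr hw
  have h1 : ‖nzd v‖ = 1 := by
    rw [nzd, norm_smul]; simp [abs_inv, abs_norm, inv_mul_cancel₀ hv']
  have h2 : ‖nzd w‖ = 1 := by
    rw [nzd, norm_smul]; simp [abs_inv, abs_norm, inv_mul_cancel₀ hw']
  rw [norm_sub_sq_real, h1, h2, nzd, nzd, real_inner_smul_left, real_inner_smul_right,
    cosAngle]
  field_simp
  ring

lemma cosAngle_comm {ι : Type*} [Fintype ι] (v w : EuclideanSpace ℝ ι) :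
    cosAngle v w = cosAngle w v := by
  rw [cosAngle, cosAngle, real_inner_comm, mul_comm]

lemma inner_rows {K : ℕ} (hK : 2 ≤ K) (k0 : Fin K)
    (t : ℝ) (e : Fin 3 → ℝ) (he : e = ![1, -1, 0])
    (S : (Fin K → Fin 3) → ℝ) (hS : ∀ j, S j = 1 + t * ∏ k, e (j k))
    (a b : Fin 3) :
    (inner ℝ (matRow S k0 a) (matRow S k0 b) : ℝ)
      = 3 ^ (K - 1) + t ^ 2 * e a * e b * 2 ^ (K - 1) := by
  classical
  have hcard : Fintype.card {i : Fin K // i ≠ k0} = K - 1 := by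
    rw [Fintype.card_subtype]
    simp [Finset.filter_ne', Finset.card_erase_of_mem]
  have hK1 : K - 1 ≠ 0 := by omega
  set P : ({i : Fin K // i ≠ k0} → Fin 3) → ℝ := fun j => ∏ i, e (j i) with hP
  have hrow : ∀ (c : Fin 3) (j : {i : Fin K // i ≠ k0} → Fin 3),
      matRow S k0 c j = 1 + t * e c * P j := by
    intro c j
    have hsplit : (∏ k : Fin K, e (if h : k = k0 then c else j ⟨k, h⟩))
        = e c * ∏ i : {i : Fin K // i ≠ k0}, e (j i) := by
      rw [← Finset.mul_prod_erase Finset.univ _ (Finset.mem_univ k0)]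
      congr 1
      · simp
      · rw [Finset.prod_subtype (p := fun i => i ≠ k0) (Finset.univ.erase k0) (fun x => by simp)
            (fun k => e (if h : k = k0 then c else j ⟨k, h⟩))]
        exact Finset.prod_congr rfl (fun x _ => by simp [dif_neg x.2])
    simp only [matRow, PiLp.toLp_apply, hS, hsplit, hP, mul_assoc]
  have hsum1 : ∑ _j : ({i : Fin K // i ≠ k0} → Fin 3), (1:ℝ) = 3 ^ (K-1) := by
    simp [Finset.card_univ, Fintype.card_fun, hcard]
  have hsumP : ∑ j : ({i : Fin K // i ≠ k0} → Fin 3), P j = 0 := by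
    have h := Finset.prod_univ_sum (fun _ : {i : Fin K // i ≠ k0} => (Finset.univ : Finset (Fin 3))) (fun _ x => e x)
    rw [Fintype.piFinset_univ] at h
    rw [hP, ← h]
    have he0 : ∑ x : Fin 3, e x = 0 := by simp [he, Fin.sum_univ_three]
    rw [Finset.prod_const, he0, Finset.card_univ, hcard, zero_pow hK1]
  have hsumP2 : ∑ j : ({i : Fin K // i ≠ k0} → Fin 3), (P j)^2 = 2 ^ (K-1) := by
    have h := Finset.prod_univ_sum (fun _ : {i : Fin K // i ≠ k0} => (Finset.univ : Finset (Fin 3))) (fun _ x => e x ^ 2)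
    rw [Fintype.piFinset_univ] at h
    have hsq : ∀ j : ({i : Fin K // i ≠ k0} → Fin 3), (P j)^2 = ∏ i, e (j i) ^ 2 := by
      intro j; rw [hP]; rw [Finset.prod_pow]
    simp only [hsq]
    rw [← h]
    have he2 : ∑ x : Fin 3, e x ^ 2 = 2 := by simp [he, Fin.sum_univ_three]; norm_num
    rw [Finset.prod_const, he2, Finset.card_univ, hcard]
  rw [PiLp.inner_apply]
  simp only [RCLike.inner_apply', conj_trivial, hrow]
  calc ∑ j, (1 + t * e a * P j) * (1 + t * e b * P j)
      = ∑ j, ((1:ℝ) + ((t * e a + t * e b) * P j + (t^2 * e a * e b) * (P j)^2)) :=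
        Finset.sum_congr rfl (by intros; ring)
    _ = (∑ _j : ({i : Fin K // i ≠ k0} → Fin 3), (1:ℝ))
        + ((t * e a + t * e b) * (∑ j, P j) + (t^2 * e a * e b) * ∑ j, (P j)^2) := by
        rw [Finset.sum_add_distrib, Finset.sum_add_distrib, ← Finset.mul_sum, ← Finset.mul_sum]
    _ = 3 ^ (K - 1) + t ^ 2 * e a * e b * 2 ^ (K - 1) := by
        rw [hsum1, hsumP, hsumP2]; ring

lemma bound_lower (u s : ℝ) (hu0 : 0 < u) (hs2 : s ^ 2 = 1 + u) (hs1 : 1 ≤ s) :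
    u / (1 + u) ≤ 2 - 2 * s⁻¹ := by
  have hspos : 0 < s := by linarith
  rw [div_le_iff₀ (by linarith : (0:ℝ) < 1 + u), ← hs2]
  have hss : s⁻¹ * s ^ 2 = s := by
    rw [pow_two, ← mul_assoc, inv_mul_cancel₀ hspos.ne', one_mul]
  nlinarith [sq_nonneg (s - 1), hss]

lemma bound_upper (u s : ℝ) (hu0 : 0 < u) (hs2 : s ^ 2 = 1 + u) (hs1 : 1 ≤ s) :
    2 - 2 * s⁻¹ ≤ u := by
  have hspos : 0 < s := by linarith
  have hss : s⁻¹ * s = 1 := inv_mul_cancel₀ hspos.ne'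
  have hu' : u = s ^ 2 - 1 := by rw [hs2]; ring
  rw [hu']
  nlinarith [mul_nonneg (sq_nonneg (s - 1)) (by linarith : (0:ℝ) ≤ s + 2), hss, hspos]

/-- Angle gap of the computational-lower-bound construction.
For `S(j₁,…,j_K) = 1 + t·∏_k e_{j_k}` with `e = (1,−1,0)` and `u = (2/3)^{K−1} t²`:
the stated cosines between the rows of `Mat(S)`, the minimality of the pair `(1,3)`,
the exact value of `Δ_min(S)²`, and the bounds `u/(1+u) ≤ Δ_min² ≤ u` (the latter when
`u ≤ 3`). -/
theorem angle_gap_planted_construction {K : ℕ} (hK : 2 ≤ K)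
    (k0 : Fin K) (hk0 : (k0 : ℕ) = 0)
    (t : ℝ) (ht : 0 < t)
    (e : Fin 3 → ℝ) (he : e = ![1, -1, 0])
    (S : (Fin K → Fin 3) → ℝ) (hS : ∀ j, S j = 1 + t * ∏ k, e (j k))
    (u : ℝ) (hu : u = ((2 : ℝ) / 3) ^ (K - 1) * t ^ 2) :
    cosAngle (matRow S k0 0) (matRow S k0 2) = (Real.sqrt (1 + u))⁻¹ ∧
    cosAngle (matRow S k0 0) (matRow S k0 1) = (1 - u) / (1 + u) ∧
    (∀ a b : Fin 3, a ≠ b →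
      ‖nzd (matRow S k0 0) - nzd (matRow S k0 2)‖
        ≤ ‖nzd (matRow S k0 a) - nzd (matRow S k0 b)‖) ∧
    (angleGap k0 S) ^ 2 = 2 - 2 * (Real.sqrt (1 + u))⁻¹ ∧
    u / (1 + u) ≤ (angleGap k0 S) ^ 2 ∧
    (u ≤ 3 → (angleGap k0 S) ^ 2 ≤ u) := by
  have hu0 : 0 < u := by rw [hu]; positivity
  have h3 : ((3:ℝ) ^ (K - 1)) ≠ 0 := by positivity
  have hm : (0:ℝ) < 3 ^ (K - 1) := by positivity
  have h23 : u * 3 ^ (K - 1) = t ^ 2 * 2 ^ (K - 1) := by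
    rw [hu, div_pow]; field_simp
  have he0 : e 0 = 1 := by simp [he]
  have he1 : e 1 = -1 := by simp [he]
  have he2 : e 2 = 0 := by simp [he]
  have hI : ∀ a b : Fin 3, (inner ℝ (matRow S k0 a) (matRow S k0 b) : ℝ)
      = 3 ^ (K - 1) * (1 + e a * e b * u) := by
    intro a b
    rw [inner_rows hK k0 t e he S hS a b]
    linear_combination (-(e a * e b)) * h23
  have hnormsq : ∀ a : Fin 3, ‖matRow S k0 a‖ ^ 2 = 3 ^ (K - 1) * (1 + e a * e a * u) := by
    intro a; rw [← real_inner_self_eq_norm_sq, hI]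
  set s : ℝ := Real.sqrt (1 + u) with hsdef
  have hs2 : s ^ 2 = 1 + u := Real.sq_sqrt (by linarith)
  have hs1 : 1 ≤ s := by
    nlinarith [Real.sqrt_nonneg (1 + u)]
  have hspos : 0 < s := by linarith
  set q : ℝ := Real.sqrt ((3:ℝ) ^ (K - 1)) with hqdef
  have hq2 : q ^ 2 = 3 ^ (K - 1) := Real.sq_sqrt hm.le
  have hqpos : 0 < q := Real.sqrt_pos.mpr hm
  have hn0 : ‖matRow S k0 0‖ = q * s := by
    have h := hnormsq 0
    rw [he0] at h
    rw [← Real.sqrt_sq (norm_nonneg (matRow S k0 0)), h,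
      show (3:ℝ) ^ (K - 1) * (1 + 1 * 1 * u) = 3 ^ (K - 1) * (1 + u) by ring,
      Real.sqrt_mul hm.le, ← hqdef, ← hsdef]
  have hn1 : ‖matRow S k0 1‖ = q * s := by
    have h := hnormsq 1
    rw [he1] at h
    rw [← Real.sqrt_sq (norm_nonneg (matRow S k0 1)), h,
      show (3:ℝ) ^ (K - 1) * (1 + (-1) * (-1) * u) = 3 ^ (K - 1) * (1 + u) by ring,
      Real.sqrt_mul hm.le, ← hqdef, ← hsdef]
  have hn2 : ‖matRow S k0 2‖ = q := by
    have h := hnormsq 2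
    rw [he2] at h
    rw [← Real.sqrt_sq (norm_nonneg (matRow S k0 2)), h,
      show (3:ℝ) ^ (K - 1) * (1 + 0 * 0 * u) = 3 ^ (K - 1) by ring, ← hqdef]
  have hne : ∀ a : Fin 3, matRow S k0 a ≠ 0 := by
    intro a h0
    have h := hnormsq a
    rw [h0, norm_zero] at h
    nlinarith [mul_nonneg (mul_self_nonneg (e a)) hu0.le]
  -- cosines
  have c02 : cosAngle (matRow S k0 0) (matRow S k0 2) = s⁻¹ := by
    rw [cosAngle, hI, he0, he2, hn0, hn2]
    rw [show q * s * q = q ^ 2 * s by ring, hq2]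
    rw [show (3:ℝ) ^ (K - 1) * (1 + 1 * 0 * u) = 3 ^ (K - 1) by ring]
    rw [div_mul_eq_div_div, div_self h3, one_div]
  have c12 : cosAngle (matRow S k0 1) (matRow S k0 2) = s⁻¹ := by
    rw [cosAngle, hI, he1, he2, hn1, hn2]
    rw [show q * s * q = q ^ 2 * s by ring, hq2]
    rw [show (3:ℝ) ^ (K - 1) * (1 + -1 * 0 * u) = 3 ^ (K - 1) by ring]
    rw [div_mul_eq_div_div, div_self h3, one_div]
  have c01 : cosAngle (matRow S k0 0) (matRow S k0 1) = (1 - u) / (1 + u) := by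
    rw [cosAngle, hI, he0, he1, hn0, hn1]
    rw [show q * s * (q * s) = q ^ 2 * s ^ 2 by ring, hq2, hs2]
    rw [show (3:ℝ) ^ (K - 1) * (1 + 1 * -1 * u) = 3 ^ (K - 1) * (1 - u) by ring]
    rw [mul_div_mul_left _ _ h3]
  have hle : (1 - u) / (1 + u) ≤ s⁻¹ := by
    rw [div_le_iff₀ (by linarith : (0:ℝ) < 1 + u)]
    have hss : s⁻¹ * (1 + u) = s := by
      rw [← hs2]; field_simp
    rw [hss]; linarith
  have hcos_le : ∀ a b : Fin 3, a ≠ b → cosAngle (matRow S k0 a) (matRow S k0 b) ≤ s⁻¹ := by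
    intro a b hab
    have htri : ∀ x : Fin 3, x = 0 ∨ x = 1 ∨ x = 2 := by decide
    rcases htri a with rfl | rfl | rfl <;> rcases htri b with rfl | rfl | rfl
    · exact absurd rfl hab
    · rw [c01]; exact hle
    · rw [c02]
    · rw [cosAngle_comm, c01]; exact hle
    · exact absurd rfl hab
    · rw [c12]
    · rw [cosAngle_comm, c02]
    · rw [cosAngle_comm, c12]
    · exact absurd rfl hab
  have hdist : ∀ a b : Fin 3, ‖nzd (matRow S k0 a) - nzd (matRow S k0 b)‖ ^ 2
      = 2 - 2 * cosAngle (matRow S k0 a) (matRow S k0 b) :=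
    fun a b => nzd_dist_sq _ _ (hne a) (hne b)
  have hmin : ∀ a b : Fin 3, a ≠ b →
      ‖nzd (matRow S k0 0) - nzd (matRow S k0 2)‖
        ≤ ‖nzd (matRow S k0 a) - nzd (matRow S k0 b)‖ := by
    intro a b hab
    have h2 : ‖nzd (matRow S k0 0) - nzd (matRow S k0 2)‖ ^ 2
        ≤ ‖nzd (matRow S k0 a) - nzd (matRow S k0 b)‖ ^ 2 := by
      rw [hdist, hdist, c02]
      have := hcos_le a b hab
      linarith
    exact (pow_le_pow_iff_left₀ (norm_nonneg _) (norm_nonneg _) two_ne_zero).mp h2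
  have hgap : angleGap k0 S = ‖nzd (matRow S k0 0) - nzd (matRow S k0 2)‖ := by
    have hAne : Set.Nonempty
        {x | ∃ a b : Fin 3, a ≠ b ∧ x = ‖nzd (matRow S k0 a) - nzd (matRow S k0 b)‖} :=
      ⟨‖nzd (matRow S k0 0) - nzd (matRow S k0 2)‖, 0, 2, by decide, rfl⟩
    have hbdd : BddBelow
        {x | ∃ a b : Fin 3, a ≠ b ∧ x = ‖nzd (matRow S k0 a) - nzd (matRow S k0 b)‖} :=
      ⟨0, by rintro x ⟨a, b, hab, rfl⟩; exact norm_nonneg _⟩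
    refine le_antisymm (csInf_le hbdd ⟨0, 2, by decide, rfl⟩) (le_csInf hAne ?_)
    rintro x ⟨a, b, hab, rfl⟩
    exact hmin a b hab
  have hgap2 : (angleGap k0 S) ^ 2 = 2 - 2 * s⁻¹ := by
    rw [hgap, hdist, c02]
  refine ⟨c02, c01, hmin, hgap2, ?_, fun _ => ?_⟩
  · rw [hgap2]; exact bound_lower u s hu0 hs2 hs1
  · rw [hgap2]; exact bound_upper u s hu0 hs2 hs1
end
end

section
/- Upper bound of misclustering error via approximate centers. Let z : [p] → [r] be surjective, θ ∈ ℝ^p entrywise positive, and {v_a}_{a∈[r]} ⊂ ℝ^d vectors with min_{a≠b} ‖v_a − v_b‖ ≥ 2c for some c > 0. Suppose ρ ≥ 1 satisfies max_{a∈[r]} Σ_{i∈z⁻¹(a)} θ(i)² ≤ ρ·min_{a∈[r]} Σ_{i∈z⁻¹(a)} θ(i)². Let S₀ ⊆ [p] be arbitrary, let ẑ : [p] → [r] and v̂ : [r] → ℝ^d be arbitrary, and define S := {i ∈ [p]∖S₀ : ‖v̂_{ẑ(i)} − v_{z(i)}‖ ≥ c}. Then min_{π∈Π} Σ_{i : ẑ(i)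 ≠ π(z(i))} θ(i)² ≤ (1+ρ)·( Σ_{i∈S₀} θ(i)² + Σ_{i∈S} θ(i)² ), where Π is the set of permutations of [r]. -/
open scoped BigOperators
open scoped Classical

noncomputable section

/-- Upper bound of misclustering error via approximate centers,
Lemma 8.  If the true centers `v_a` are `2c`-separated and the per-cluster squared
degree masses are `ρ`-balanced, then for any estimate `(ẑ, v̂)` the permutation-minimized
misclustered degree mass is at most `(1+ρ)(Σ_{S₀} θ² + Σ_S θ²)`, where
`S = {i ∉ S₀ : ‖v̂_{ẑ(i)} − v_{z(i)}‖ ≥ c}`. -/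
theorem misclustering_upper_bound {p r d : ℕ} (c ρ : ℝ) (hc : 0 < c) (hρ : 1 ≤ ρ)
    (z : Fin p → Fin r) (hz : Function.Surjective z)
    (θ : Fin p → ℝ) (hθ : ∀ i, 0 < θ i)
    (v : Fin r → EuclideanSpace ℝ (Fin d))
    (hsep : ∀ a b : Fin r, a ≠ b → 2 * c ≤ ‖v a - v b‖)
    (hbal : ∀ a b : Fin r,
      ∑ i ∈ Finset.univ.filter (fun i => z i = a), (θ i) ^ 2
        ≤ ρ * ∑ i ∈ Finset.univ.filter (fun i => z i = b), (θ i) ^ 2)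
    (S0 : Finset (Fin p))
    (zh : Fin p → Fin r) (vh : Fin r → EuclideanSpace ℝ (Fin d))
    (S : Finset (Fin p))
    (hS : S = (Finset.univ \ S0).filter (fun i => c ≤ ‖vh (zh i) - v (z i)‖)) :
    Finset.univ.inf' Finset.univ_nonempty
        (fun π : Equiv.Perm (Fin r) =>
          ∑ i ∈ Finset.univ.filter (fun i => zh i ≠ π (z i)), (θ i) ^ 2)
      ≤ (1 + ρ) * (∑ i ∈ S0, (θ i) ^ 2 + ∑ i ∈ S, (θ i) ^ 2) := by
  classical
  have hθ2 : ∀ i, (0:ℝ) ≤ θ i ^ 2 := fun i => sq_nonneg _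
  have hρ0 : (0:ℝ) ≤ ρ := by linarith
  -- candidate centers near each true center
  set B : Fin r → Finset (Fin r) :=
    fun a => Finset.univ.filter (fun ah => ‖vh ah - v a‖ < c) with hB
  have hBmem : ∀ a ah, ah ∈ B a ↔ ‖vh ah - v a‖ < c := by
    intro a ah
    simp [hB]
  have hBdisj : ∀ a b : Fin r, a ≠ b → Disjoint (B a) (B b) := by
    intro a b hab
    rw [Finset.disjoint_left]
    intro ah ha hb
    rw [hBmem] at ha hb
    have h1 := hsep a b hab
    have h3 : v a - v b = (vh ah - v b) - (vh ah - v a) := by abel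
    have h2 : ‖v a - v b‖ ≤ ‖vh ah - v b‖ + ‖vh ah - v a‖ := by
      rw [h3]; exact norm_sub_le _ _
    linarith
  -- a choice of a candidate center in each nonempty `B a`
  set f : Fin r → Fin r :=
    fun a => if h : (B a).Nonempty then (B a).min' h else a with hf
  have hfmem : ∀ a, (B a).Nonempty → f a ∈ B a := by
    intro a h
    simp only [hf, dif_pos h]
    exact Finset.min'_mem _ h
  have hfinj : Set.InjOn f {a | (B a).Nonempty} := by
    intro a ha b hb hab
    by_contra hne
    exact (Finset.disjoint_left.mp (hBdisj a b hne) (hfmem a ha)) (hab ▸ hfmem b hb)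
  -- extend to a permutation
  let e := Equiv.Set.imageOfInjOn f {a | (B a).Nonempty} hfinj
  let π : Equiv.Perm (Fin r) := e.extendSubtype
  have hπ : ∀ a, (B a).Nonempty → π a = f a := by
    intro a ha
    have := e.extendSubtype_apply_of_mem a ha
    simpa [π, e, Equiv.Set.imageOfInjOn] using this
  have hπmem : ∀ a, (B a).Nonempty → π a ∈ B a := by
    intro a ha; rw [hπ a ha]; exact hfmem a ha
  -- the exceptional sets
  set T : Finset (Fin p) := S0 ∪ S with hT
  have hST : Disjoint S0 S := by
    rw [Finset.disjoint_left]
    intro i hi0 hiS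
    rw [hS, Finset.mem_filter, Finset.mem_sdiff] at hiS
    exact hiS.1.2 hi0
  have hTsum : ∑ i ∈ T, θ i ^ 2 = ∑ i ∈ S0, θ i ^ 2 + ∑ i ∈ S, θ i ^ 2 :=
    Finset.sum_union hST
  have hgood : ∀ i, i ∉ T → zh i ∈ B (z i) := by
    intro i hiT
    rw [hT, Finset.mem_union] at hiT
    push_neg at hiT
    have hiS := hiT.2
    rw [hS, Finset.mem_filter, Finset.mem_sdiff] at hiS
    push_neg at hiS
    have := hiS ⟨Finset.mem_univ i, hiT.1⟩
    rw [hBmem]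
    linarith
  -- clusters and counting
  set A : Finset (Fin r) := Finset.univ.filter (fun a => (B a).Nonempty) with hA
  set A2 : Finset (Fin r) := Finset.univ.filter (fun a => 2 ≤ (B a).card) with hA2
  have hA2subA : A2 ⊆ A := by
    intro a ha
    rw [hA2, Finset.mem_filter] at ha
    rw [hA, Finset.mem_filter]
    exact ⟨Finset.mem_univ a, Finset.card_pos.mp (by omega)⟩
  have hsumcard : ∑ a ∈ A, (B a).card ≤ r := by
    rw [← Finset.card_biUnion (fun a _ b _ hab => hBdisj a b hab)]
    calc (A.biUnion B).card ≤ (Finset.univ : Finset (Fin r)).card :=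
          Finset.card_le_card (Finset.subset_univ _)
      _ = r := by simp
  have hcard2 : A.card + A2.card ≤ r := by
    have h1 : ∑ a ∈ A \ A2, (B a).card + ∑ a ∈ A2, (B a).card = ∑ a ∈ A, (B a).card :=
      Finset.sum_sdiff hA2subA
    have h2 : A2.card • 2 ≤ ∑ a ∈ A2, (B a).card := by
      apply Finset.card_nsmul_le_sum
      intro a ha
      rw [hA2, Finset.mem_filter] at ha
      exact ha.2
    have h3 : (A \ A2).card • 1 ≤ ∑ a ∈ A \ A2, (B a).card := by
      apply Finset.card_nsmul_le_sum
      intro a ha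
      have := hA2subA
      have haA : a ∈ A := (Finset.mem_sdiff.mp ha).1
      rw [hA, Finset.mem_filter] at haA
      exact Finset.card_pos.mpr haA.2
    have h4 : (A \ A2).card = A.card - A2.card := Finset.card_sdiff_of_subset hA2subA
    have h5 : A2.card ≤ A.card := Finset.card_le_card hA2subA
    simp only [smul_eq_mul] at h2 h3
    omega
  have hAc : A2.card ≤ (Finset.univ \ A).card := by
    rw [Finset.card_sdiff_of_subset (Finset.subset_univ A), Finset.card_univ, Fintype.card_fin]
    omega
  -- cluster masses
  set cs : Fin r → ℝ :=
    fun a => ∑ i ∈ Finset.univ.filter (fun i => z i = a), (θ i) ^ 2 with hcs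
  have hbal' : ∀ a b, cs a ≤ ρ * cs b := hbal
  have hcs0 : ∀ a, 0 ≤ cs a := fun a => Finset.sum_nonneg (fun i _ => hθ2 i)
  have hfiber : ∀ R : Finset (Fin r),
      ∑ a ∈ R, cs a = ∑ i ∈ Finset.univ.filter (fun i => z i ∈ R), (θ i) ^ 2 :=
    fun R => Finset.sum_fiberwise_eq_sum_filter Finset.univ R z (fun i => (θ i) ^ 2)
  -- the good-but-misclustered set
  set G : Finset (Fin p) :=
    (Finset.univ \ T).filter (fun i => zh i ≠ π (z i)) with hG
  have hTG : Disjoint T G := by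
    rw [Finset.disjoint_left]
    intro i hiT hiG
    rw [hG, Finset.mem_filter, Finset.mem_sdiff] at hiG
    exact hiG.1.2 hiT
  have hGsub : G ⊆ Finset.univ.filter (fun i => z i ∈ A2) := by
    intro i hi
    rw [hG, Finset.mem_filter, Finset.mem_sdiff] at hi
    obtain ⟨⟨_, hiT⟩, hine⟩ := hi
    have h1 : zh i ∈ B (z i) := hgood i hiT
    have hne : (B (z i)).Nonempty := ⟨_, h1⟩
    have h2 : π (z i) ∈ B (z i) := hπmem _ hne
    rw [Finset.mem_filter]
    refine ⟨Finset.mem_univ i, ?_⟩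
    rw [hA2, Finset.mem_filter]
    exact ⟨Finset.mem_univ _, Finset.one_lt_card.mpr ⟨_, h1, _, h2, hine⟩⟩
  have hAcsub : Finset.univ.filter (fun i => z i ∈ Finset.univ \ A) ⊆ T := by
    intro i hi
    rw [Finset.mem_filter, Finset.mem_sdiff] at hi
    by_contra hiT
    have h1 : zh i ∈ B (z i) := hgood i hiT
    have : z i ∈ A := by
      rw [hA, Finset.mem_filter]
      exact ⟨Finset.mem_univ _, ⟨_, h1⟩⟩
    exact hi.2.2 this
  -- the key bound on exceptional cluster mass
  have hd : ∑ a ∈ A2, cs a ≤ ρ * ∑ b ∈ Finset.univ \ A, cs b := by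
    rcases Finset.eq_empty_or_nonempty (Finset.univ \ A) with hAc0 | hAcne
    · have hA2e : A2 = ∅ := by
        rw [hAc0] at hAc
        simpa using Finset.card_eq_zero.mp (Nat.le_zero.mp (by simpa using hAc))
      rw [hA2e, hAc0]
      simp
    · obtain ⟨b0, hb0mem, hb0min⟩ := Finset.exists_min_image (Finset.univ \ A) cs hAcne
      calc ∑ a ∈ A2, cs a ≤ ∑ _a ∈ A2, ρ * cs b0 :=
            Finset.sum_le_sum (fun a _ => hbal' a b0)
        _ = (A2.card : ℝ) * (ρ * cs b0) := by
            rw [Finset.sum_const, nsmul_eq_mul]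
        _ ≤ ((Finset.univ \ A).card : ℝ) * (ρ * cs b0) := by
            apply mul_le_mul_of_nonneg_right (by exact_mod_cast hAc)
            exact mul_nonneg hρ0 (hcs0 b0)
        _ = ρ * (((Finset.univ \ A).card : ℝ) * cs b0) := by ring
        _ ≤ ρ * ∑ b ∈ Finset.univ \ A, cs b := by
            apply mul_le_mul_of_nonneg_left _ hρ0
            have := Finset.card_nsmul_le_sum (Finset.univ \ A) cs (cs b0)
              (fun b hb => hb0min b hb)
            simpa [nsmul_eq_mul] using this
  -- main estimate for the permutation π
  have hmain : ∑ i ∈ Finset.univ.filter (fun i => zh i ≠ π (z i)), (θ i) ^ 2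
      ≤ (1 + ρ) * (∑ i ∈ S0, (θ i) ^ 2 + ∑ i ∈ S, (θ i) ^ 2) := by
    have hMsub : Finset.univ.filter (fun i => zh i ≠ π (z i)) ⊆ T ∪ G := by
      intro i hi
      rw [Finset.mem_filter] at hi
      by_cases hiT : i ∈ T
      · exact Finset.mem_union_left _ hiT
      · apply Finset.mem_union_right
        rw [hG, Finset.mem_filter, Finset.mem_sdiff]
        exact ⟨⟨Finset.mem_univ i, hiT⟩, hi.2⟩
    calc ∑ i ∈ Finset.univ.filter (fun i => zh i ≠ π (z i)), (θ i) ^ 2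
        ≤ ∑ i ∈ T ∪ G, (θ i) ^ 2 :=
          Finset.sum_le_sum_of_subset_of_nonneg hMsub (fun i _ _ => hθ2 i)
      _ = ∑ i ∈ T, (θ i) ^ 2 + ∑ i ∈ G, (θ i) ^ 2 := Finset.sum_union hTG
      _ ≤ ∑ i ∈ T, (θ i) ^ 2
            + ∑ i ∈ Finset.univ.filter (fun i => z i ∈ A2), (θ i) ^ 2 := by
          gcongr
      _ = ∑ i ∈ T, (θ i) ^ 2 + ∑ a ∈ A2, cs a := by rw [hfiber]
      _ ≤ ∑ i ∈ T, (θ i) ^ 2 + ρ * ∑ b ∈ Finset.univ \ A, cs b := by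
          gcongr
      _ = ∑ i ∈ T, (θ i) ^ 2
            + ρ * ∑ i ∈ Finset.univ.filter (fun i => z i ∈ Finset.univ \ A), (θ i) ^ 2 := by
          rw [hfiber]
      _ ≤ ∑ i ∈ T, (θ i) ^ 2 + ρ * ∑ i ∈ T, (θ i) ^ 2 := by
          gcongr
      _ = (1 + ρ) * ∑ i ∈ T, (θ i) ^ 2 := by ring
      _ = (1 + ρ) * (∑ i ∈ S0, (θ i) ^ 2 + ∑ i ∈ S, (θ i) ^ 2) := by rw [hTsum]
  exact le_trans (Finset.inf'_le _ (Finset.mem_univ π)) hmain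
end
end

section
/- Positive-degree reparameterization with doubled communities. Let K ≥ 1, z : [p] → [r], S : [r]^K → ℝ, and θ ∈ ℝ^p with θ(i) ≠ 0 for all i (mixed signs allowed). Then there exist an assignment z′ : [p] → [2r] and a core tensor S′ : [2r]^K → ℝ such that, with θ′ := |θ| (entrywise absolute value, so θ′ is entrywise strictly positive), S′(z′(i₁),…,z′(i_K))·∏_{k=1}^K θ′(i_k) = S(z(i₁),…,z(i_K))·∏_{k=1}^K θ(i_k) for all (i₁,…,i_K) ∈ [p]^K. That is, every block-r dTBM tensor with mixed-signed degrees can be represented as a block-2r dTBM tensor with positive degrees. -/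
open scoped BigOperators

noncomputable section

/-- Positive-degree reparameterization with doubled communities.
Every block-`r` dTBM tensor with nowhere-vanishing, possibly mixed-signed degrees `θ`
can be represented as a block-`2r` dTBM tensor with the positive degrees `|θ|`. -/
theorem positive_degree_reparameterization {K p r : ℕ} (hK : 1 ≤ K)
    (z : Fin p → Fin r) (S : (Fin K → Fin r) → ℝ)
    (θ : Fin p → ℝ) (hθ : ∀ i, θ i ≠ 0) :
    ∃ (z' : Fin p → Fin (2 * r)) (S' : (Fin K → Fin (2 * r)) → ℝ),
      ∀ i : Fin K → Fin p,
        meanTensor z' S' (fun i => |θ i|) i = meanTensor z S θ i := by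
  classical
  set e : Fin 2 × Fin r ≃ Fin (2 * r) := finProdFinEquiv
  refine ⟨fun i => e (if θ i < 0 then 1 else 0, z i),
    fun a => S (fun k => (e.symm (a k)).2) * ∏ k, ((-1 : ℝ) ^ ((e.symm (a k)).1 : ℕ)),
    fun i => ?_⟩
  simp only [meanTensor, Equiv.symm_apply_apply]
  rw [mul_assoc, ← Finset.prod_mul_distrib]
  congr 1
  refine Finset.prod_congr rfl fun k _ => ?_
  by_cases h : θ (i k) < 0
  · simp [h, abs_of_neg h]
  · simp [h, abs_of_nonneg (not_lt.mp h)]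
end
end

section
/- Deterministic error bound for weighted spherical k-means initialization. Fix K ≥ 2 and constants c₁, c₂, c₃, c₄, c > 0, ρ ≥ 1, η ≥ 1. There exists a constant C > 0, depending only on K, c₁, c₂, c₃, c₄, c, ρ, η, such that the following holds. Let (z, S, θ) ∈ P with θ(i) ≥ c for all i and max_a Σ_{i∈z⁻¹(a)}θ(i)² ≤ ρ·min_a Σ_{i∈z⁻¹(a)}θ(i)², let X be the mean tensor, and suppose δ := min_{i,j : z(i)≠z(j)} ‖Mat(X)_{i:}^s − Mat(X)_{j:}^s‖ > 0. Let X̂ ∈ ℝ^{p × p^{K−1}} be any matrix, set S₀ := {i ∈ [p] : X̂_{i:} = 0}, and suppose ẑ : [p] → [r] and centers x̂ : [r] → ℝ^{p^{K−1}} satisfy the η-relaxed weighted k-means property: Σ_{i∉S₀} ‖X̂_{i:}‖²·‖X̂_{i:}^s − x̂_{ẑ(i)}‖² ≤ η · inf Σ_{i∉S₀} ‖X̂_{i:}‖²·‖X̂_{i:}^s − x̄_{z̄(i)}‖², the infimum being over all centers x̄ : [r] → ℝ^{p^{K−1}} and all assignments z̄ of [p]∖S₀ to [r]. Then min_{π∈Π}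 Σ_{i : ẑ(i) ≠ π(z(i))} θ(i)² ≤ C · (r^{K−1}/(δ²·p^{K−1})) · ‖X̂ − Mat(X)‖_F², where Π is the set of permutations of [r] and ‖·‖_F is the Frobenius norm. -/
open scoped BigOperators
open scoped Classical
noncomputable section

lemma norm_nzd_le_one {ι : Type*} [Fintype ι] (v : EuclideanSpace ℝ ι) : ‖nzd v‖ ≤ 1 := by
  rcases eq_or_ne v 0 with h | h
  · simp [nzd, h]
  · rw [nzd, norm_smul, norm_inv, norm_norm, inv_mul_cancel₀ (norm_ne_zero_iff.2 h)]

lemma nzd_smul {ι : Type*} [Fintype ι] (t : ℝ) (ht : 0 < t) (v : EuclideanSpace ℝ ι) :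
    nzd (t • v) = nzd v := by
  rcases eq_or_ne v 0 with h | h
  · simp [h]
  · rw [nzd, nzd, norm_smul, Real.norm_eq_abs, abs_of_pos ht, smul_smul]
    congr 1
    field_simp

lemma nzd_sub_le_aux {ι : Type*} [Fintype ι] (a b : EuclideanSpace ℝ ι)
    (ha : a ≠ 0) (hb : b ≠ 0) (hba : ‖b‖ ≤ ‖a‖) :
    ‖nzd a - nzd b‖ ≤ 2 * ‖a - b‖ / ‖a‖ := by
  have hA : (0:ℝ) < ‖a‖ := norm_pos_iff.2 ha
  have hB : (0:ℝ) < ‖b‖ := norm_pos_iff.2 hb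
  have key : nzd a - nzd b = ‖a‖⁻¹ • (a - b) + (‖a‖⁻¹ - ‖b‖⁻¹) • b := by
    rw [nzd, nzd]; rw [smul_sub, sub_smul]; abel
  rw [key]
  calc ‖‖a‖⁻¹ • (a - b) + (‖a‖⁻¹ - ‖b‖⁻¹) • b‖
      ≤ ‖‖a‖⁻¹ • (a - b)‖ + ‖(‖a‖⁻¹ - ‖b‖⁻¹) • b‖ := norm_add_le _ _
    _ = ‖a‖⁻¹ * ‖a - b‖ + (‖b‖⁻¹ - ‖a‖⁻¹) * ‖b‖ := by
        rw [norm_smul, norm_smul, norm_inv, norm_norm, Real.norm_eq_abs,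
          abs_of_nonpos (by simp [sub_nonpos]; exact inv_anti₀ hB hba), neg_sub]
    _ = ‖a‖⁻¹ * ‖a - b‖ + (‖a‖ - ‖b‖) / ‖a‖ := by
        field_simp
    _ ≤ ‖a‖⁻¹ * ‖a - b‖ + ‖a - b‖ / ‖a‖ := by
        gcongr
        exact (norm_sub_norm_le a b)
    _ = 2 * ‖a - b‖ / ‖a‖ := by field_simp; ring
  
lemma nzd_sub_le {ι : Type*} [Fintype ι] (a b : EuclideanSpace ℝ ι)
    (ha : a ≠ 0) (hb : b ≠ 0) :
    ‖nzd a - nzd b‖ ≤ 2 * ‖a - b‖ / ‖b‖ := by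
  have hA : (0:ℝ) < ‖a‖ := norm_pos_iff.2 ha
  have hB : (0:ℝ) < ‖b‖ := norm_pos_iff.2 hb
  rcases le_total ‖b‖ ‖a‖ with h | h
  · refine (nzd_sub_le_aux a b ha hb h).trans ?_
    exact div_le_div_of_nonneg_left (by positivity) hB h
  · rw [norm_sub_rev]
    have := nzd_sub_le_aux b a hb ha h
    rwa [norm_sub_rev b a] at this

lemma eucl_norm_sq {ι : Type*} [Fintype ι] (x : EuclideanSpace ℝ ι) :
    ‖x‖ ^ 2 = ∑ i, (x i) ^ 2 := by
  rw [EuclideanSpace.norm_eq, Real.sq_sqrt (by positivity)]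
  simp [Real.norm_eq_abs, sq_abs]

section rowlemmas

variable {K p r : ℕ} (k0 : Fin K) (z : Fin p → Fin r) (S : (Fin K → Fin r) → ℝ)
  (θ : Fin p → ℝ)

/-- cluster-level rows -/
def uRow (a : Fin r) : EuclideanSpace ℝ ({i : Fin K // i ≠ k0} → Fin p) :=
  WithLp.toLp 2 (fun j => S (fun k => if h : k = k0 then a else z (j ⟨k, h⟩))
    * ∏ k : {i : Fin K // i ≠ k0}, θ (j k))

lemma matRow_meanTensor_eq (i : Fin p) :
    matRow (meanTensor z S θ) k0 i = θ i • uRow k0 z S θ (z i) := by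
  ext j
  show meanTensor z S θ _ = θ i * uRow k0 z S θ (z i) j
  rw [meanTensor, uRow]
  have h1 : (fun k => z (if h : k = k0 then i else j ⟨k, h⟩))
      = fun k => if h : k = k0 then z i else z (j ⟨k, h⟩) := by
    funext k; exact apply_dite z _ _ _
  have h2 : ∏ k : Fin K, θ (if h : k = k0 then i else j ⟨k, h⟩)
      = θ i * ∏ k : {i : Fin K // i ≠ k0}, θ (j k) := by
    rw [Fintype.prod_eq_mul_prod_compl k0]
    congr 1
    · simp
    · calc ∏ i1 ∈ ({k0}ᶜ : Finset (Fin K)), θ (if h : i1 = k0 then i else j ⟨i1, h⟩)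
          = ∏ k : {i' : Fin K // i' ≠ k0}, θ (if h : (k : Fin K) = k0 then i else j ⟨k, h⟩) :=
            Finset.prod_subtype _ (fun x => by simp) _
        _ = ∏ k : {i' : Fin K // i' ≠ k0}, θ (j k) :=
            Fintype.prod_congr _ _ (fun k => by rcases k with ⟨k, hk⟩; rw [dif_neg hk])
  rw [h1, h2]; ring

lemma card_ne_subtype : Fintype.card {i : Fin K // i ≠ k0} = K - 1 := by
  have := Fintype.card_subtype_compl (fun i : Fin K => i = k0)
  simpa [Fintype.card_subtype_eq] using this

lemma fiber_card (b : {i : Fin K // i ≠ k0} → Fin r) :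
    ((Finset.univ.filter
        (fun j : {i : Fin K // i ≠ k0} → Fin p => (fun k => z (j k)) = b)).card : ℕ)
      = ∏ k : {i : Fin K // i ≠ k0},
          (Finset.univ.filter (fun i : Fin p => z i = b k)).card := by
  rw [← Fintype.card_subtype]
  have e1 : {j : {i : Fin K // i ≠ k0} → Fin p // (fun k => z (j k)) = b}
      ≃ {j : {i : Fin K // i ≠ k0} → Fin p // ∀ k, z (j k) = b k} :=
    Equiv.subtypeEquivRight fun j => funext_iff
  have e2 : {j : {i : Fin K // i ≠ k0} → Fin p // ∀ k, z (j k) = b k}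
      ≃ ∀ k : {i : Fin K // i ≠ k0}, {i : Fin p // z i = b k} :=
    @Equiv.subtypePiEquivPi _ (fun _ => Fin p) (fun k i => z i = b k)
  rw [Fintype.card_congr (e1.trans e2), Fintype.card_pi]
  exact Finset.prod_congr rfl fun k _ => Fintype.card_subtype _

end rowlemmas

section normbound

variable {K p r : ℕ} (k0 : Fin K) (z : Fin p → Fin r) (S : (Fin K → Fin r) → ℝ)
  (θ : Fin p → ℝ)

lemma uRow_norm_ge (c c1 c3 : ℝ) (hc : 0 < c) (hc1 : 0 < c1) (hc3 : 0 < c3)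
    (hθ : ∀ i, c ≤ θ i)
    (hcard : ∀ a : Fin r, c1 * p / r ≤ ((Finset.univ.filter (fun i => z i = a)).card : ℝ))
    (hS : ∀ a : Fin r, c3 ≤ ‖matRow S k0 a‖) (a : Fin r) :
    Real.sqrt (c3 ^ 2 * c ^ (2 * (K - 1)) * (c1 * p / r) ^ (K - 1))
      ≤ ‖uRow k0 z S θ a‖ := by
  have hpr : (0:ℝ) ≤ c1 * p / r := by positivity
  have hnorm : ‖uRow k0 z S θ a‖
      = Real.sqrt (∑ j, (uRow k0 z S θ a j) ^ 2) := by
    rw [EuclideanSpace.norm_eq]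
    congr 1
    exact Finset.sum_congr rfl fun j _ => by rw [Real.norm_eq_abs, sq_abs]
  rw [hnorm]
  apply Real.sqrt_le_sqrt
  set Φ : ({i : Fin K // i ≠ k0} → Fin p) → ({i : Fin K // i ≠ k0} → Fin r) :=
    fun j => fun k => z (j k) with hΦ
  set R : ({i : Fin K // i ≠ k0} → Fin r) → ℝ := fun b => (matRow S k0 a b) ^ 2 with hR
  have hR0 : ∀ b, 0 ≤ R b := fun b => sq_nonneg _
  -- step 1 : pull out the θ-product
  have step1 : c ^ (2 * (K - 1)) * ∑ j, R (Φ j) ≤ ∑ j, (uRow k0 z S θ a j) ^ 2 := by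
    rw [Finset.mul_sum]
    apply Finset.sum_le_sum
    intro j _
    have huj : (uRow k0 z S θ a j) ^ 2
        = R (Φ j) * (∏ k : {i : Fin K // i ≠ k0}, θ (j k)) ^ 2 := by
      simp only [uRow, hR, matRow, hΦ]; ring
    rw [huj]
    have hprodθ : c ^ (2 * (K - 1)) ≤ (∏ k : {i : Fin K // i ≠ k0}, θ (j k)) ^ 2 := by
      rw [← Finset.prod_pow, pow_mul]
      calc (c ^ 2) ^ (K - 1) = ∏ _k : {i : Fin K // i ≠ k0}, c ^ 2 := by
            rw [Finset.prod_const, Finset.card_univ, card_ne_subtype]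
        _ ≤ ∏ k : {i : Fin K // i ≠ k0}, θ (j k) ^ 2 :=
            Finset.prod_le_prod (fun _ _ => by positivity)
              (fun k _ => by have := hθ (j k); nlinarith [hc.le])
    calc c ^ (2*(K-1)) * R (Φ j) = R (Φ j) * c ^ (2*(K-1)) := by ring
      _ ≤ R (Φ j) * (∏ k : {i : Fin K // i ≠ k0}, θ (j k)) ^ 2 := by
          exact mul_le_mul_of_nonneg_left hprodθ (hR0 _)
  -- step 2 : fiberwise count
  have step2 : (c1 * p / r) ^ (K - 1) * ∑ b, R b ≤ ∑ j, R (Φ j) := by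
    rw [← Finset.sum_fiberwise_of_maps_to (fun j _ => Finset.mem_univ (Φ j))
      (fun j => R (Φ j))]
    rw [Finset.mul_sum]
    apply Finset.sum_le_sum
    intro b _
    have hinner : ∑ j ∈ Finset.univ.filter (fun j => Φ j = b), R (Φ j)
        = ((Finset.univ.filter (fun j => Φ j = b)).card : ℝ) * R b := by
      rw [Finset.sum_congr rfl (fun j hj => by rw [(Finset.mem_filter.1 hj).2])]
      rw [Finset.sum_const, nsmul_eq_mul]
    rw [hinner]
    apply mul_le_mul_of_nonneg_right _ (hR0 b)
    calc (c1 * p / r) ^ (K - 1)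
        = ∏ k : {i : Fin K // i ≠ k0}, (c1 * p / r) := by
          rw [Finset.prod_const, Finset.card_univ, card_ne_subtype]
      _ ≤ ∏ k : {i : Fin K // i ≠ k0},
            ((Finset.univ.filter (fun i : Fin p => z i = b k)).card : ℝ) :=
          Finset.prod_le_prod (fun _ _ => hpr) (fun k _ => hcard (b k))
      _ = (((Finset.univ.filter (fun j => Φ j = b)).card : ℕ) : ℝ) := by
          rw [fiber_card k0 z b]; push_cast; ring
  -- step 3 : S row norm
  have step3 : c3 ^ 2 ≤ ∑ b, R b := by
    have : ‖matRow S k0 a‖ ^ 2 = ∑ b, R b := eucl_norm_sq _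
    nlinarith [hS a, hc3.le, norm_nonneg (matRow S k0 a)]
  calc c3 ^ 2 * c ^ (2 * (K - 1)) * (c1 * p / r) ^ (K - 1)
      = c ^ (2*(K-1)) * ((c1 * p / r) ^ (K-1) * c3 ^ 2) := by ring
    _ ≤ c ^ (2*(K-1)) * ((c1 * p / r) ^ (K-1) * ∑ b, R b) := by
        have : (c1 * p / r) ^ (K-1) * c3 ^ 2 ≤ (c1 * p / r) ^ (K-1) * ∑ b, R b :=
          mul_le_mul_of_nonneg_left step3 (by positivity)
        exact mul_le_mul_of_nonneg_left this (by positivity)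
    _ ≤ c ^ (2*(K-1)) * ∑ j, R (Φ j) :=
        mul_le_mul_of_nonneg_left step2 (by positivity)
    _ ≤ ∑ j, (uRow k0 z S θ a j) ^ 2 := step1

end normbound

lemma exists_perm_extend {n : ℕ} (s : Finset (Fin n)) (f : Fin n → Fin n)
    (hinj : Set.InjOn f ↑s) : ∃ π : Equiv.Perm (Fin n), ∀ a ∈ s, π a = f a := by
  classical
  have hcard : (Finset.univ \ s).card = (Finset.univ \ s.image f).card := by
    rw [Finset.card_sdiff_of_subset (Finset.subset_univ _), Finset.card_sdiff_of_subset (Finset.subset_univ _),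
      Finset.card_image_of_injOn hinj]
  set e := Finset.equivOfCardEq hcard with he
  set F : Fin n → Fin n := fun x =>
    if hx : x ∈ s then f x else (e ⟨x, Finset.mem_sdiff.2 ⟨Finset.mem_univ x, hx⟩⟩ : Fin n)
    with hF
  have himg : ∀ x (hx : x ∈ s), F x ∈ s.image f := by
    intro x hx; rw [hF]; simp only [dif_pos hx]
    exact Finset.mem_image_of_mem f hx
  have hnimg : ∀ x (hx : x ∉ s), F x ∉ s.image f := by
    intro x hx
    have := (e ⟨x, Finset.mem_sdiff.2 ⟨Finset.mem_univ x, hx⟩⟩).2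
    rw [Finset.mem_sdiff] at this
    rw [hF]; simp only [dif_neg hx]
    exact this.2
  have hFinj : Function.Injective F := by
    intro x y hxy
    by_cases hx : x ∈ s <;> by_cases hy : y ∈ s
    · apply hinj hx hy
      rw [hF] at hxy; simpa [dif_pos hx, dif_pos hy] using hxy
    · exact absurd (hxy ▸ himg x hx) (hnimg y hy)
    · exact absurd (hxy ▸ hnimg x hx) (not_not.2 (himg y hy))
    · have : (⟨x, Finset.mem_sdiff.2 ⟨Finset.mem_univ x, hx⟩⟩ : {a // a ∈ Finset.univ \ s}) =
          ⟨y, Finset.mem_sdiff.2 ⟨Finset.mem_univ y, hy⟩⟩ :=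
        e.injective (Subtype.ext (by rw [hF] at hxy; simpa [dif_neg hx, dif_neg hy] using hxy))
      exact congrArg Subtype.val this
  refine ⟨Equiv.ofBijective F (Finite.injective_iff_bijective.1 hFinj), ?_⟩
  intro a ha
  show F a = f a
  rw [hF]; simp [dif_pos ha]
set_option maxHeartbeats 1000000 in
/-- Deterministic error bound for weighted spherical k-means
initialization, Theorem 4 core.  There is a constant `C` depending only on
`K, c₁, c₂, c₃, c₄, c, ρ, η` such that for any parameters in `P` with `θ ≥ c`,
`ρ`-balanced degrees, mean-row angle separation `δ > 0`, any matrix `X̂`, and any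
`η`-relaxed weighted k-means solution `(ẑ, x̂)` on the nonzero rows of `X̂`,
`min_π Σ_{ẑ(i) ≠ π(z(i))} θ(i)² ≤ C·(r^{K−1}/(δ²p^{K−1}))·‖X̂ − Mat(X)‖_F²`. -/
theorem weighted_kmeans_initialization_bound (K : ℕ) (hK : 2 ≤ K)
    (c1 c2 c3 c4 c ρ η : ℝ)
    (hc1 : 0 < c1) (hc2 : 0 < c2) (hc3 : 0 < c3) (hc4 : 0 < c4) (hc : 0 < c)
    (hρ : 1 ≤ ρ) (hη : 1 ≤ η) :
    ∃ C : ℝ, 0 < C ∧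
      ∀ (p r : ℕ) (k0 : Fin K), (k0 : ℕ) = 0 →
      ∀ (z : Fin p → Fin r) (S : (Fin K → Fin r) → ℝ) (θ : Fin p → ℝ),
        inP k0 c1 c2 c3 c4 z S θ →
        (∀ i, c ≤ θ i) →
        (∀ a b : Fin r,
          ∑ i ∈ Finset.univ.filter (fun i => z i = a), (θ i) ^ 2
            ≤ ρ * ∑ i ∈ Finset.univ.filter (fun i => z i = b), (θ i) ^ 2) →
      ∀ δ : ℝ,
        δ = sInf {x | ∃ i j : Fin p, z i ≠ z j ∧
              x = ‖nzd (matRow (meanTensor z S θ) k0 i)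
                    - nzd (matRow (meanTensor z S θ) k0 j)‖} →
        0 < δ →
      ∀ (Xh : Fin p → EuclideanSpace ℝ ({i : Fin K // i ≠ k0} → Fin p))
        (S0 : Finset (Fin p)), S0 = Finset.univ.filter (fun i => Xh i = 0) →
      ∀ (zh : Fin p → Fin r)
        (xh : Fin r → EuclideanSpace ℝ ({i : Fin K // i ≠ k0} → Fin p)),
        (∀ (xb : Fin r → EuclideanSpace ℝ ({i : Fin K // i ≠ k0} → Fin p))
           (zb : Fin p → Fin r),
          ∑ i ∈ S0ᶜ, ‖Xh i‖ ^ 2 * ‖nzd (Xh i) - xh (zh i)‖ ^ 2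
            ≤ η * ∑ i ∈ S0ᶜ, ‖Xh i‖ ^ 2 * ‖nzd (Xh i) - xb (zb i)‖ ^ 2) →
        Finset.univ.inf' Finset.univ_nonempty
            (fun π : Equiv.Perm (Fin r) =>
              ∑ i ∈ Finset.univ.filter (fun i => zh i ≠ π (z i)), (θ i) ^ 2)
          ≤ C * ((r : ℝ) ^ (K - 1) / (δ ^ 2 * (p : ℝ) ^ (K - 1))) *
              ∑ i : Fin p, ‖Xh i - matRow (meanTensor z S θ) k0 i‖ ^ 2 := by
  classical
  refine ⟨256 * (1 + ρ) * (1 + 4 * η) / (c3 ^ 2 * c ^ (2 * (K - 1)) * c1 ^ (K - 1)),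
    div_pos (by nlinarith) (by positivity), ?_⟩
  intro p r k0 hk0 z S θ hP hθc hbal δ hδdef hδ Xh S0 hS0 zh xh hkm
  obtain ⟨hθpos, hcard, hSrow, -⟩ := hP
  set Y := matRow (meanTensor z S θ) k0 with hYdef
  set Err2 : ℝ := ∑ i, ‖Xh i - Y i‖ ^ 2 with hErr2def
  have hErr2 : 0 ≤ Err2 := by positivity
  -- p and r are positive
  have hp : 0 < p := by
    rcases Nat.eq_zero_or_pos p with hp0 | hp0
    · exfalso
      subst hp0
      have hempty : {x | ∃ i j : Fin 0, z i ≠ z j ∧ x = ‖nzd (Y i) - nzd (Y j)‖} = ∅ :=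
        Set.eq_empty_of_forall_notMem (by rintro x ⟨i, j, -⟩; exact i.elim0)
      rw [hδdef, hempty, Real.sInf_empty] at hδ
      exact lt_irrefl 0 hδ
    · exact hp0
  have hr : 0 < r := Fin.pos (z ⟨0, hp⟩)
  have hp' : (0:ℝ) < p := by exact_mod_cast hp
  have hr' : (0:ℝ) < r := by exact_mod_cast hr
  -- cluster rows
  set u := uRow k0 z S θ with hudef
  have hYu : ∀ i, Y i = θ i • u (z i) := fun i => matRow_meanTensor_eq k0 z S θ i
  set um : ℝ := Real.sqrt (c3 ^ 2 * c ^ (2 * (K - 1)) * (c1 * p / r) ^ (K - 1)) with humdef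
  have hum2 : um ^ 2 = c3 ^ 2 * c ^ (2 * (K - 1)) * (c1 * p / r) ^ (K - 1) :=
    Real.sq_sqrt (by positivity)
  have hum : 0 < um := Real.sqrt_pos.2 (by positivity)
  have huge : ∀ a, um ≤ ‖u a‖ := fun a =>
    uRow_norm_ge k0 z S θ c c1 c3 hc hc1 hc3 hθc (fun a => (hcard a).1)
      (fun a => (hSrow a).1) a
  have hYnorm : ∀ i, ‖Y i‖ = θ i * ‖u (z i)‖ := by
    intro i
    rw [hYu i, norm_smul, Real.norm_eq_abs, abs_of_pos (hθpos i)]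
  have hYlb : ∀ i, θ i * um ≤ ‖Y i‖ := by
    intro i
    rw [hYnorm i]
    exact mul_le_mul_of_nonneg_left (huge (z i)) (hθpos i).le
  have hYpos : ∀ i, 0 < ‖Y i‖ := fun i =>
    lt_of_lt_of_le (by have := hθpos i; positivity) (hYlb i)
  have hY0 : ∀ i, Y i ≠ 0 := fun i => norm_pos_iff.1 (hYpos i)
  set xs : Fin r → EuclideanSpace ℝ ({i : Fin K // i ≠ k0} → Fin p) :=
    fun a => nzd (u a) with hxsdef
  have hnzdY : ∀ i, nzd (Y i) = xs (z i) := fun i => by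
    rw [hYu i]; exact nzd_smul _ (hθpos i) _
  -- δ facts
  have hDbdd : BddBelow {x | ∃ i j : Fin p, z i ≠ z j ∧ x = ‖nzd (Y i) - nzd (Y j)‖} :=
    ⟨0, by rintro x ⟨i, j, -, rfl⟩; positivity⟩
  have hδle : ∀ i j : Fin p, z i ≠ z j → δ ≤ ‖xs (z i) - xs (z j)‖ := by
    intro i j hij
    rw [← hnzdY i, ← hnzdY j, hδdef]
    exact csInf_le hDbdd ⟨i, j, hij, rfl⟩
  have hrep : ∀ a : Fin r, ∃ i, z i = a := by
    intro a
    by_contra h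
    push_neg at h
    have h0 : (Finset.univ.filter (fun i => z i = a)) = ∅ :=
      Finset.filter_eq_empty_iff.2 (fun {i} _ => h i)
    have := (hcard a).1
    rw [h0] at this
    simp only [Finset.card_empty, Nat.cast_zero] at this
    have hpos : (0:ℝ) < c1 * p / r := div_pos (mul_pos hc1 hp') hr'
    linarith
  have hδsep : ∀ a b : Fin r, a ≠ b → δ ≤ ‖xs a - xs b‖ := by
    intro a b hab
    obtain ⟨i, hi⟩ := hrep a
    obtain ⟨j, hj⟩ := hrep b
    have := hδle i j (by rw [hi, hj]; exact hab)
    rwa [hi, hj] at this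
  have hδ2 : δ ≤ 2 := by
    obtain ⟨i, hi⟩ := hrep (z ⟨0, hp⟩)    -- dummy; we need two distinct clusters
    have hne : {x | ∃ i j : Fin p, z i ≠ z j ∧ x = ‖nzd (Y i) - nzd (Y j)‖}.Nonempty := by
      by_contra h
      rw [Set.not_nonempty_iff_eq_empty] at h
      rw [hδdef, h, Real.sInf_empty] at hδ
      exact lt_irrefl 0 hδ
    obtain ⟨x, i', j', hij', rfl⟩ := hne
    have h1 : δ ≤ ‖nzd (Y i') - nzd (Y j')‖ := hδdef ▸ csInf_le hDbdd ⟨i', j', hij', rfl⟩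
    have h2 : ‖nzd (Y i') - nzd (Y j')‖ ≤ 2 := by
      calc ‖nzd (Y i') - nzd (Y j')‖ ≤ ‖nzd (Y i')‖ + ‖nzd (Y j')‖ := norm_sub_le _ _
        _ ≤ 1 + 1 := add_le_add (norm_nzd_le_one _) (norm_nzd_le_one _)
        _ = 2 := by norm_num
    linarith
  -- membership in S0ᶜ
  have hS0mem : ∀ i, i ∈ S0ᶜ ↔ Xh i ≠ 0 := by
    intro i
    rw [Finset.mem_compl, hS0, Finset.mem_filter]
    simp
  -- the k-means cost bound
  set L : ℝ := ∑ i ∈ S0ᶜ, ‖Xh i‖ ^ 2 * ‖nzd (Xh i) - xh (zh i)‖ ^ 2 with hLdef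
  have hL4 : L ≤ η * (4 * Err2) := by
    refine le_trans (hkm xs z) ?_
    have hsum : ∑ i ∈ S0ᶜ, ‖Xh i‖ ^ 2 * ‖nzd (Xh i) - xs (z i)‖ ^ 2 ≤ 4 * Err2 := by
      have hterm : ∀ i ∈ S0ᶜ, ‖Xh i‖ ^ 2 * ‖nzd (Xh i) - xs (z i)‖ ^ 2
          ≤ 4 * ‖Xh i - Y i‖ ^ 2 := by
        intro i hi
        have hXne : Xh i ≠ 0 := (hS0mem i).1 hi
        have hXpos : (0:ℝ) < ‖Xh i‖ := norm_pos_iff.2 hXne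
        have h1 : ‖nzd (Xh i) - xs (z i)‖ ≤ 2 * ‖Xh i - Y i‖ / ‖Xh i‖ := by
          have := nzd_sub_le (Y i) (Xh i) (hY0 i) hXne
          rw [norm_sub_rev (nzd (Y i)), norm_sub_rev (Y i)] at this
          rwa [hnzdY i] at this
        calc ‖Xh i‖ ^ 2 * ‖nzd (Xh i) - xs (z i)‖ ^ 2
            ≤ ‖Xh i‖ ^ 2 * (2 * ‖Xh i - Y i‖ / ‖Xh i‖) ^ 2 := by
              apply mul_le_mul_of_nonneg_left _ (by positivity)
              exact pow_le_pow_left₀ (norm_nonneg _) h1 2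
          _ = 4 * ‖Xh i - Y i‖ ^ 2 := by field_simp; ring
      calc ∑ i ∈ S0ᶜ, ‖Xh i‖ ^ 2 * ‖nzd (Xh i) - xs (z i)‖ ^ 2
          ≤ ∑ i ∈ S0ᶜ, 4 * ‖Xh i - Y i‖ ^ 2 := Finset.sum_le_sum hterm
        _ ≤ ∑ i, 4 * ‖Xh i - Y i‖ ^ 2 :=
            Finset.sum_le_sum_of_subset_of_nonneg (Finset.subset_univ _)
              (fun i _ _ => by positivity)
        _ = 4 * Err2 := by rw [hErr2def, Finset.mul_sum]
    exact mul_le_mul_of_nonneg_left hsum (by linarith)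
  -- the set of well-behaved points
  set Good : Finset (Fin p) := Finset.univ.filter
      (fun i => ‖Xh i - Y i‖ < δ / 16 * ‖Y i‖ ∧ ‖nzd (Xh i) - xh (zh i)‖ < δ / 8)
    with hGooddef
  have hGoodE : ∀ i ∈ Good, ‖Xh i - Y i‖ < δ / 16 * ‖Y i‖ :=
    fun i hi => ((Finset.mem_filter.1 hi).2).1
  have hGoodfit : ∀ i ∈ Good, ‖nzd (Xh i) - xh (zh i)‖ < δ / 8 :=
    fun i hi => ((Finset.mem_filter.1 hi).2).2
  have hGoodXlb : ∀ i ∈ Good, ‖Y i‖ / 2 ≤ ‖Xh i‖ := by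
    intro i hi
    have h1 := hGoodE i hi
    have h2 : ‖Y i‖ - ‖Xh i‖ ≤ ‖Xh i - Y i‖ := by
      rw [norm_sub_rev]; exact norm_sub_norm_le _ _
    nlinarith [hYpos i, hδ2]
  have hGoodXne : ∀ i ∈ Good, Xh i ≠ 0 := by
    intro i hi h
    have h1 := hGoodXlb i hi
    rw [h, norm_zero] at h1
    linarith [hYpos i]
  have hGoodxs : ∀ i ∈ Good, ‖nzd (Xh i) - xs (z i)‖ < δ / 8 := by
    intro i hi
    have hXne := hGoodXne i hi
    have h1 : ‖nzd (Xh i) - xs (z i)‖ ≤ 2 * ‖Xh i - Y i‖ / ‖Y i‖ := by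
      have := nzd_sub_le (Xh i) (Y i) hXne (hY0 i)
      rwa [hnzdY i] at this
    have h2 : 2 * ‖Xh i - Y i‖ / ‖Y i‖ < δ / 8 := by
      rw [div_lt_iff₀ (hYpos i)]
      have := hGoodE i hi
      nlinarith [hYpos i]
    linarith
  -- outlier bound
  have houtlier : ∀ i, i ∉ Good →
      θ i ^ 2 ≤ 256 / (δ ^ 2 * um ^ 2) *
        (‖Xh i - Y i‖ ^ 2 + ‖Xh i‖ ^ 2 * ‖nzd (Xh i) - xh (zh i)‖ ^ 2) := by
    intro i hi
    rw [div_mul_eq_mul_div, le_div_iff₀ (by positivity)]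
    have hkey : θ i ^ 2 * (δ ^ 2 * um ^ 2)
        ≤ 256 * ‖Xh i - Y i‖ ^ 2 + 256 * (‖Xh i‖ ^ 2 * ‖nzd (Xh i) - xh (zh i)‖ ^ 2) := by
      rw [hGooddef] at hi
      simp only [Finset.mem_filter, Finset.mem_univ, true_and, not_and, not_lt] at hi
      by_cases hA : ‖Xh i - Y i‖ < δ / 16 * ‖Y i‖
      · -- then the fit is bad
        have hB : δ / 8 ≤ ‖nzd (Xh i) - xh (zh i)‖ := hi hA
        have hXlb : θ i * um / 2 ≤ ‖Xh i‖ := by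
          have h2 : ‖Y i‖ - ‖Xh i‖ ≤ ‖Xh i - Y i‖ := by
            rw [norm_sub_rev]; exact norm_sub_norm_le _ _
          have := hYlb i
          nlinarith [hYpos i, hδ2]
        have hprod : (θ i * um / 2) * (δ / 8) ≤ ‖Xh i‖ * ‖nzd (Xh i) - xh (zh i)‖ :=
          mul_le_mul hXlb hB (by positivity) (norm_nonneg _)
        have h2 : ((θ i * um / 2) * (δ / 8)) ^ 2
            ≤ (‖Xh i‖ * ‖nzd (Xh i) - xh (zh i)‖) ^ 2 :=
          pow_le_pow_left₀
            (by nlinarith [mul_pos (mul_pos (hθpos i) hum) hδ]) hprod 2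
        nlinarith [h2, sq_nonneg (‖Xh i - Y i‖)]
      · push_neg at hA
        have h1 : θ i * um * (δ / 16) ≤ ‖Xh i - Y i‖ := by
          calc θ i * um * (δ / 16) = δ / 16 * (θ i * um) := by ring
            _ ≤ δ / 16 * ‖Y i‖ :=
              mul_le_mul_of_nonneg_left (hYlb i) (by positivity)
            _ ≤ ‖Xh i - Y i‖ := hA
        have h2 : (θ i * um * (δ / 16)) ^ 2 ≤ ‖Xh i - Y i‖ ^ 2 :=
          pow_le_pow_left₀
            (by nlinarith [mul_pos (mul_pos (hθpos i) hum) hδ]) h1 2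
        nlinarith [mul_nonneg (sq_nonneg (‖Xh i‖)) (sq_nonneg (‖nzd (Xh i) - xh (zh i)‖))]
    linarith [hkey]
  -- total mass of bad points
  have hGoodc : ∑ i ∈ Goodᶜ, θ i ^ 2 ≤ 256 * (1 + 4 * η) / (δ ^ 2 * um ^ 2) * Err2 := by
    have hwfit : ∑ i ∈ Goodᶜ, ‖Xh i‖ ^ 2 * ‖nzd (Xh i) - xh (zh i)‖ ^ 2 ≤ L := by
      have h0 : ∀ i ∈ S0, ‖Xh i‖ ^ 2 * ‖nzd (Xh i) - xh (zh i)‖ ^ 2 = 0 := by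
        intro i hi
        rw [hS0] at hi
        rw [(Finset.mem_filter.1 hi).2]
        simp
      calc ∑ i ∈ Goodᶜ, ‖Xh i‖ ^ 2 * ‖nzd (Xh i) - xh (zh i)‖ ^ 2
          ≤ ∑ i, ‖Xh i‖ ^ 2 * ‖nzd (Xh i) - xh (zh i)‖ ^ 2 :=
            Finset.sum_le_sum_of_subset_of_nonneg (Finset.subset_univ _)
              (fun i _ _ => by positivity)
        _ = ∑ i ∈ S0, (‖Xh i‖ ^ 2 * ‖nzd (Xh i) - xh (zh i)‖ ^ 2)
            + ∑ i ∈ S0ᶜ, (‖Xh i‖ ^ 2 * ‖nzd (Xh i) - xh (zh i)‖ ^ 2) :=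
            (Finset.sum_add_sum_compl S0 _).symm
        _ = L := by rw [Finset.sum_eq_zero h0, zero_add]
    have hEsub : ∑ i ∈ Goodᶜ, ‖Xh i - Y i‖ ^ 2 ≤ Err2 :=
      Finset.sum_le_sum_of_subset_of_nonneg (Finset.subset_univ _)
        (fun i _ _ => by positivity)
    calc ∑ i ∈ Goodᶜ, θ i ^ 2
        ≤ ∑ i ∈ Goodᶜ, 256 / (δ ^ 2 * um ^ 2) *
            (‖Xh i - Y i‖ ^ 2 + ‖Xh i‖ ^ 2 * ‖nzd (Xh i) - xh (zh i)‖ ^ 2) :=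
          Finset.sum_le_sum (fun i hi => houtlier i (Finset.mem_compl.1 hi))
      _ = 256 / (δ ^ 2 * um ^ 2) * (∑ i ∈ Goodᶜ, ‖Xh i - Y i‖ ^ 2
            + ∑ i ∈ Goodᶜ, ‖Xh i‖ ^ 2 * ‖nzd (Xh i) - xh (zh i)‖ ^ 2) := by
          rw [← Finset.mul_sum, Finset.sum_add_distrib]
      _ ≤ 256 / (δ ^ 2 * um ^ 2) * (Err2 + η * (4 * Err2)) := by
          apply mul_le_mul_of_nonneg_left _ (by positivity)
          have := hL4
          linarith
      _ = 256 * (1 + 4 * η) / (δ ^ 2 * um ^ 2) * Err2 := by ring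
  -- ownership of centers by clusters
  set owned : Fin r → Finset (Fin r) := fun a =>
      Finset.univ.filter (fun h => ∃ i ∈ Good, z i = a ∧ zh i = h) with howneddef
  have hownmem : ∀ i ∈ Good, zh i ∈ owned (z i) := by
    intro i hi
    exact Finset.mem_filter.2 ⟨Finset.mem_univ _, ⟨i, hi, rfl, rfl⟩⟩
  have hcenter_close : ∀ a : Fin r, ∀ h ∈ owned a, ‖xh h - xs a‖ < δ / 4 := by
    intro a h hh
    obtain ⟨i, hi, hzi, hzhi⟩ := (Finset.mem_filter.1 hh).2
    have h1 := hGoodxs i hi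
    have h2 := hGoodfit i hi
    subst hzi
    subst hzhi
    have htri := dist_triangle (xh (zh i)) (nzd (Xh i)) (xs (z i))
    simp only [dist_eq_norm] at htri
    have hrev : ‖xh (zh i) - nzd (Xh i)‖ = ‖nzd (Xh i) - xh (zh i)‖ := norm_sub_rev _ _
    linarith
  have hdisj : ∀ a b : Fin r, a ≠ b → Disjoint (owned a) (owned b) := by
    intro a b hab
    rw [Finset.disjoint_left]
    intro h h1 h2
    have hc1 := hcenter_close a h h1
    have hc2 := hcenter_close b h h2
    have hsep := hδsep a b hab
    have htri : ‖xs a - xs b‖ ≤ ‖xh h - xs a‖ + ‖xh h - xs b‖ := by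
      have := norm_sub_le (xh h - xs b) (xh h - xs a)
      rw [sub_sub_sub_cancel_left] at this
      rw [norm_sub_rev]
      linarith
    linarith
  set A : Finset (Fin r) := Finset.univ.filter (fun a => (owned a).Nonempty) with hAdef
  set A2 : Finset (Fin r) := Finset.univ.filter (fun a => 2 ≤ (owned a).card) with hA2def
  have hA2A : A2 ⊆ A := by
    intro a ha
    rw [hA2def, Finset.mem_filter] at ha
    exact Finset.mem_filter.2 ⟨Finset.mem_univ _, Finset.card_pos.1 (by omega)⟩
  have hcards : A.card + A2.card ≤ r := by
    have h1 : ∑ a, (owned a).card ≤ r := by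
      rw [← Finset.card_biUnion (fun x _ y _ hxy => hdisj x y hxy)]
      calc (Finset.univ.biUnion owned).card
          ≤ (Finset.univ : Finset (Fin r)).card :=
            Finset.card_le_card (Finset.subset_univ _)
        _ = r := by rw [Finset.card_univ, Fintype.card_fin]
    have h2 : ∑ a ∈ A, (owned a).card ≤ ∑ a, (owned a).card :=
      Finset.sum_le_sum_of_subset (Finset.subset_univ _)
    have h3 : ∑ a ∈ A, (owned a).card
        = ∑ a ∈ A \ A2, (owned a).card + ∑ a ∈ A2, (owned a).card :=
      (Finset.sum_sdiff hA2A).symm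
    have h4 : ∀ a ∈ A2, 2 ≤ (owned a).card :=
      fun a ha => (Finset.mem_filter.1 ha).2
    have h5 : ∀ a ∈ A \ A2, 1 ≤ (owned a).card := by
      intro a ha
      have := (Finset.mem_filter.1 (Finset.mem_sdiff.1 ha).1).2
      exact Finset.card_pos.2 this
    have h6 : (A \ A2).card * 1 ≤ ∑ a ∈ A \ A2, (owned a).card := by
      rw [← Finset.sum_const_nat (m := 1) (fun _ _ => rfl)]
      exact Finset.sum_le_sum h5
    have h7 : A2.card * 2 ≤ ∑ a ∈ A2, (owned a).card := by
      rw [← Finset.sum_const_nat (m := 2) (fun _ _ => rfl)]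
      exact Finset.sum_le_sum h4
    have h8 : (A \ A2).card = A.card - A2.card := by
      rw [Finset.card_sdiff_of_subset hA2A]
    have h9 : A2.card ≤ A.card := Finset.card_le_card hA2A
    omega
  -- representative center of each cluster
  set f : Fin r → Fin r := fun a =>
    if h : (owned a).Nonempty then h.choose else a with hfdef
  have hfmem : ∀ a ∈ A, f a ∈ owned a := by
    intro a ha
    have hne : (owned a).Nonempty := (Finset.mem_filter.1 ha).2
    rw [hfdef]
    simp only [dif_pos hne]
    exact hne.choose_spec
  have hinj : Set.InjOn f ↑(A \ A2) := by
    intro a ha b hb hab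
    by_contra hne
    have haA : a ∈ A := (Finset.mem_sdiff.1 (Finset.mem_coe.1 ha)).1
    have hbA : b ∈ A := (Finset.mem_sdiff.1 (Finset.mem_coe.1 hb)).1
    exact Finset.disjoint_left.1 (hdisj a b hne) (hfmem a haA) (hab ▸ hfmem b hbA)
  obtain ⟨π, hπ⟩ := exists_perm_extend (A \ A2) f hinj
  have hgoodclass : ∀ i ∈ Good, z i ∉ A2 → zh i = π (z i) := by
    intro i hi hA2
    have hmem := hownmem i hi
    have hzA : z i ∈ A := Finset.mem_filter.2 ⟨Finset.mem_univ _, ⟨zh i, hmem⟩⟩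
    have hle1 : (owned (z i)).card ≤ 1 := by
      by_contra hgt
      push_neg at hgt
      exact hA2 (Finset.mem_filter.2 ⟨Finset.mem_univ _, hgt⟩)
    have hfz : π (z i) = f (z i) := hπ _ (Finset.mem_sdiff.2 ⟨hzA, hA2⟩)
    rw [hfz]
    exact Finset.card_le_one.1 hle1 _ hmem _ (hfmem _ hzA)
  -- cluster masses
  set T : Fin r → ℝ := fun a => ∑ i ∈ Finset.univ.filter (fun i => z i = a), θ i ^ 2
    with hTdef
  have hT0 : ∀ a, 0 ≤ T a := fun a => Finset.sum_nonneg (fun i _ => sq_nonneg _)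
  have hfiber : ∀ B : Finset (Fin r),
      ∑ a ∈ B, T a = ∑ i ∈ Finset.univ.filter (fun i => z i ∈ B), θ i ^ 2 := by
    intro B
    rw [← Finset.sum_fiberwise_of_maps_to (g := z)
      (s := Finset.univ.filter (fun i => z i ∈ B)) (t := B)
      (fun i hi => (Finset.mem_filter.1 hi).2) (fun i => θ i ^ 2)]
    apply Finset.sum_congr rfl
    intro a haB
    rw [hTdef]
    apply Finset.sum_congr _ (fun _ _ => rfl)
    ext i
    simp only [Finset.mem_filter, Finset.mem_univ, true_and]
    exact ⟨fun h => ⟨by rw [h]; exact haB, h⟩, fun h => h.2⟩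
  -- the total mass of split clusters is controlled
  have hA2mass : ∑ a ∈ A2, T a ≤ ρ * ∑ i ∈ Goodᶜ, θ i ^ 2 := by
    rcases Finset.eq_empty_or_nonempty A2 with hA2e | hA2ne
    · rw [hA2e, Finset.sum_empty]
      have h0 : (0:ℝ) ≤ ∑ i ∈ Goodᶜ, θ i ^ 2 :=
        Finset.sum_nonneg (fun i _ => sq_nonneg _)
      nlinarith
    · have hA2pos : 0 < A2.card := Finset.card_pos.2 hA2ne
      have hAcne : (Finset.univ \ A).Nonempty := by
        rw [Finset.sdiff_nonempty]
        intro hsub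
        have hAu : A = Finset.univ := Finset.univ_subset_iff.1 hsub
        rw [hAu, Finset.card_univ, Fintype.card_fin] at hcards
        omega
      obtain ⟨b0, hb0, hb0min⟩ := Finset.exists_min_image (Finset.univ \ A) T hAcne
      have hc2 : A2.card ≤ (Finset.univ \ A).card := by
        have h1 : (Finset.univ \ A).card = r - A.card := by
          rw [Finset.card_sdiff_of_subset (Finset.subset_univ _), Finset.card_univ, Fintype.card_fin]
        omega
      have hcardle : (A2.card : ℝ) ≤ ((Finset.univ \ A).card : ℝ) := Nat.cast_le.2 hc2
      calc ∑ a ∈ A2, T a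
          ≤ ∑ a ∈ A2, ρ * T b0 := Finset.sum_le_sum (fun a _ => hbal a b0)
        _ = (A2.card : ℝ) * (ρ * T b0) := by rw [Finset.sum_const, nsmul_eq_mul]
        _ ≤ ((Finset.univ \ A).card : ℝ) * (ρ * T b0) := by
            apply mul_le_mul_of_nonneg_right hcardle
            have := hT0 b0
            nlinarith
        _ = ∑ a ∈ Finset.univ \ A, ρ * T b0 := by rw [Finset.sum_const, nsmul_eq_mul]
        _ ≤ ∑ a ∈ Finset.univ \ A, ρ * T a :=
            Finset.sum_le_sum (fun a ha =>
              mul_le_mul_of_nonneg_left (hb0min a ha) (by linarith))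
        _ = ρ * ∑ a ∈ Finset.univ \ A, T a := by rw [Finset.mul_sum]
        _ ≤ ρ * ∑ i ∈ Goodᶜ, θ i ^ 2 := by
            apply mul_le_mul_of_nonneg_left _ (by linarith)
            rw [hfiber]
            apply Finset.sum_le_sum_of_subset_of_nonneg
            · intro i hi
              rw [Finset.mem_filter] at hi
              rw [Finset.mem_compl]
              intro hGood
              have hzA : z i ∈ A :=
                Finset.mem_filter.2 ⟨Finset.mem_univ _, ⟨zh i, hownmem i hGood⟩⟩
              exact (Finset.mem_sdiff.1 hi.2).2 hzA
            · intro i _ _; exact sq_nonneg _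
  -- main decomposition
  have hmain : ∑ i ∈ Finset.univ.filter (fun i => zh i ≠ π (z i)), θ i ^ 2
      ≤ ∑ i ∈ Goodᶜ, θ i ^ 2 + ∑ a ∈ A2, T a := by
    have hsub : Finset.univ.filter (fun i => zh i ≠ π (z i))
        ⊆ Goodᶜ ∪ Finset.univ.filter (fun i => z i ∈ A2) := by
      intro i hi
      refine Finset.mem_union.2 ?_
      by_cases hG : i ∈ Good
      · refine Or.inr (Finset.mem_filter.2 ⟨Finset.mem_univ _, ?_⟩)
        by_contra hA2
        exact (Finset.mem_filter.1 hi).2 (hgoodclass i hG hA2)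
      · exact Or.inl (Finset.mem_compl.2 hG)
    calc ∑ i ∈ Finset.univ.filter (fun i => zh i ≠ π (z i)), θ i ^ 2
        ≤ ∑ i ∈ Goodᶜ ∪ Finset.univ.filter (fun i => z i ∈ A2), θ i ^ 2 :=
          Finset.sum_le_sum_of_subset_of_nonneg hsub (fun _ _ _ => sq_nonneg _)
      _ ≤ ∑ i ∈ Goodᶜ, θ i ^ 2
          + ∑ i ∈ Finset.univ.filter (fun i => z i ∈ A2), θ i ^ 2 := by
          rw [← Finset.union_sdiff_self_eq_union, Finset.sum_union Finset.disjoint_sdiff]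
          apply add_le_add le_rfl
          exact Finset.sum_le_sum_of_subset_of_nonneg (Finset.sdiff_subset)
            (fun _ _ _ => sq_nonneg _)
      _ = ∑ i ∈ Goodᶜ, θ i ^ 2 + ∑ a ∈ A2, T a := by rw [hfiber]
  -- conclusion
  refine le_trans (Finset.inf'_le _ (Finset.mem_univ π)) ?_
  calc (∑ i ∈ Finset.univ.filter (fun i => zh i ≠ π (z i)), θ i ^ 2)
      ≤ ∑ i ∈ Goodᶜ, θ i ^ 2 + ∑ a ∈ A2, T a := hmain
    _ ≤ ∑ i ∈ Goodᶜ, θ i ^ 2 + ρ * ∑ i ∈ Goodᶜ, θ i ^ 2 := by linarith [hA2mass]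
    _ = (1 + ρ) * ∑ i ∈ Goodᶜ, θ i ^ 2 := by ring
    _ ≤ (1 + ρ) * (256 * (1 + 4 * η) / (δ ^ 2 * um ^ 2) * Err2) :=
        mul_le_mul_of_nonneg_left hGoodc (by linarith)
    _ = 256 * (1 + ρ) * (1 + 4 * η) / (c3 ^ 2 * c ^ (2 * (K - 1)) * c1 ^ (K - 1)) *
          ((r : ℝ) ^ (K - 1) / (δ ^ 2 * (p : ℝ) ^ (K - 1))) * Err2 := by
        rw [hum2]
        have h1 : (c1 * (p:ℝ) / (r:ℝ)) ^ (K - 1)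
            = c1 ^ (K-1) * (p:ℝ) ^ (K-1) / (r:ℝ) ^ (K-1) := by
          rw [div_pow, mul_pow]
        rw [h1]
        have hpK : (0:ℝ) < (p:ℝ) ^ (K-1) := by positivity
        have hrK : (0:ℝ) < (r:ℝ) ^ (K-1) := by positivity
        field_simp
end
end

section
/- Exactly balanced degrees preserve row angles. Let K ≥ 2 and let X be the mean tensor of the symmetric dTBM with parameters (z, S, θ), where z : [p] → [r] is surjective, θ is entrywise strictly positive, and the per-cluster squared degree norms are exactly balanced: Σ_{i∈z⁻¹(a)} θ(i)² = τ for all a ∈ [r], for some τ > 0. Then for all i, j ∈ [p] such that Mat(S)_{z(i):} and Mat(S)_{z(j):} are nonzero: cos(Mat(X)_{i:}, Mat(X)_{j:}) = cos(Mat(S)_{z(i):}, Mat(S)_{z(j):}), and hence ‖Mat(X)_{i:}^s − Mat(X)_{j:}^s‖ = ‖Mat(S)_{z(i):}^s − Mat(S)_{z(j):}^s‖. -/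
open scoped BigOperators
open scoped Classical

noncomputable section

lemma fiber_sum {p r : ℕ} {ι : Type*} [Fintype ι] [DecidableEq ι] (z : Fin p → Fin r) (θ : Fin p → ℝ) (τ : ℝ)
    (hbal : ∀ a : Fin r, ∑ i ∈ Finset.univ.filter (fun i => z i = a), (θ i) ^ 2 = τ)
    (H : (ι → Fin r) → ℝ) :
    ∑ J : ι → Fin p, (∏ k, θ (J k)) ^ 2 * H (fun k => z (J k))
      = τ ^ Fintype.card ι * ∑ b : ι → Fin r, H b := by
  classical
  rw [← Finset.sum_fiberwise_of_maps_to
      (g := fun J : ι → Fin p => (fun k => z (J k)))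
      (fun J _ => Finset.mem_univ _)
      (fun J => (∏ k, θ (J k)) ^ 2 * H (fun k => z (J k)))]
  rw [Finset.mul_sum]
  refine Finset.sum_congr rfl fun b _ => ?_
  have hfe : Finset.univ.filter (fun J : ι → Fin p => (fun k => z (J k)) = b)
      = Fintype.piFinset (fun k => Finset.univ.filter (fun i => z i = b k)) := by
    ext J; simp [funext_iff]
  rw [hfe]
  have h1 : ∀ J ∈ Fintype.piFinset (fun k => Finset.univ.filter (fun i : Fin p => z i = b k)),
      (∏ k, θ (J k)) ^ 2 * H (fun k => z (J k)) = (∏ k, (θ (J k)) ^ 2) * H b := by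
    intro J hJ
    have hz : (fun k => z (J k)) = b := by
      funext k
      have := Fintype.mem_piFinset.mp hJ k
      simpa using this
    rw [hz, Finset.prod_pow]
  rw [Finset.sum_congr rfl h1, ← Finset.sum_mul,
    ← Finset.prod_univ_sum (t := fun k => Finset.univ.filter (fun i : Fin p => z i = b k))
      (f := fun _ i => θ i ^ 2)]
  simp only [hbal, Finset.prod_const, Finset.card_univ]

lemma row_eq {K p r : ℕ} (k0 : Fin K) (z : Fin p → Fin r) (S : (Fin K → Fin r) → ℝ)
    (θ : Fin p → ℝ) (i : Fin p) (J : {k : Fin K // k ≠ k0} → Fin p) :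
    matRow (meanTensor z S θ) k0 i J
      = (θ i * ∏ k : {k : Fin K // k ≠ k0}, θ (J k)) * matRow S k0 (z i) (fun k => z (J k)) := by
  classical
  simp only [matRow, meanTensor]
  have h1 : (fun k : Fin K => z (if h : k = k0 then i else J ⟨k, h⟩))
      = fun k : Fin K => if h : k = k0 then z i else z (J ⟨k, h⟩) := by
    funext k; by_cases h : k = k0 <;> simp [h]
  have h2 : ∏ k : Fin K, θ (if h : k = k0 then i else J ⟨k, h⟩)
      = θ i * ∏ k : {k : Fin K // k ≠ k0}, θ (J k) := by
    rw [Fintype.prod_eq_mul_prod_compl k0]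
    congr 1
    · simp
    · rw [Finset.prod_subtype (p := fun k : Fin K => k ≠ k0) ({k0}ᶜ : Finset (Fin K)) (fun x => by simp [Ne])
        (fun k => θ (if h : k = k0 then i else J ⟨k, h⟩))]
      refine Fintype.prod_congr _ _ fun k => ?_
      simp [k.2]
  rw [h1, h2]
  ring

lemma inner_rows_s19 {K p r : ℕ} (k0 : Fin K) (z : Fin p → Fin r) (S : (Fin K → Fin r) → ℝ)
    (θ : Fin p → ℝ) (τ : ℝ)
    (hbal : ∀ a : Fin r, ∑ i ∈ Finset.univ.filter (fun i => z i = a), (θ i) ^ 2 = τ)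
    (i j : Fin p) :
    (inner ℝ (matRow (meanTensor z S θ) k0 i) (matRow (meanTensor z S θ) k0 j) : ℝ)
      = θ i * θ j * τ ^ Fintype.card {k : Fin K // k ≠ k0}
          * inner ℝ (matRow S k0 (z i)) (matRow S k0 (z j)) := by
  classical
  rw [PiLp.inner_apply, PiLp.inner_apply]
  simp only [RCLike.inner_apply, conj_trivial]
  simp only [mul_comm ((matRow (meanTensor z S θ) k0 j).ofLp _), mul_comm ((matRow S k0 (z j)).ofLp _)]
  have key := fiber_sum (ι := {k : Fin K // k ≠ k0}) z θ τ hbal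
      (fun b => matRow S k0 (z i) b * matRow S k0 (z j) b)
  calc ∑ J : {k : Fin K // k ≠ k0} → Fin p,
        matRow (meanTensor z S θ) k0 i J * matRow (meanTensor z S θ) k0 j J
      = θ i * θ j * ∑ J : {k : Fin K // k ≠ k0} → Fin p,
          (∏ k, θ (J k)) ^ 2 * (matRow S k0 (z i) (fun k => z (J k))
            * matRow S k0 (z j) (fun k => z (J k))) := by
        rw [Finset.mul_sum]
        refine Finset.sum_congr rfl fun J _ => ?_
        rw [row_eq, row_eq]; ring
    _ = _ := by rw [key]; ring

lemma norm_row {K p r : ℕ} (k0 : Fin K) (z : Fin p → Fin r) (S : (Fin K → Fin r) → ℝ)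
    (θ : Fin p → ℝ) (τ : ℝ) (hτ : 0 < τ)
    (hbal : ∀ a : Fin r, ∑ i ∈ Finset.univ.filter (fun i => z i = a), (θ i) ^ 2 = τ)
    (i : Fin p) (hθi : 0 < θ i) :
    ‖matRow (meanTensor z S θ) k0 i‖
      = θ i * Real.sqrt (τ ^ Fintype.card {k : Fin K // k ≠ k0}) * ‖matRow S k0 (z i)‖ := by
  set m := Fintype.card {k : Fin K // k ≠ k0}
  have hsq : Real.sqrt (τ ^ m) ^ 2 = τ ^ m := Real.sq_sqrt (by positivity)
  have h1 : ‖matRow (meanTensor z S θ) k0 i‖ ^ 2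
      = (θ i * Real.sqrt (τ ^ m) * ‖matRow S k0 (z i)‖) ^ 2 := by
    rw [← real_inner_self_eq_norm_sq, inner_rows_s19 k0 z S θ τ hbal i i,
        real_inner_self_eq_norm_sq, mul_pow, mul_pow, hsq]
    ring
  have hnn : 0 ≤ θ i * Real.sqrt (τ ^ m) * ‖matRow S k0 (z i)‖ := by positivity
  calc ‖matRow (meanTensor z S θ) k0 i‖
      = Real.sqrt (‖matRow (meanTensor z S θ) k0 i‖ ^ 2) :=
        (Real.sqrt_sq (norm_nonneg _)).symm
    _ = Real.sqrt ((θ i * Real.sqrt (τ ^ m) * ‖matRow S k0 (z i)‖) ^ 2) := by rw [h1]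
    _ = _ := Real.sqrt_sq hnn

lemma nzd_dist {ι : Type*} [Fintype ι] (a b : EuclideanSpace ℝ ι) (ha : a ≠ 0) (hb : b ≠ 0) :
    ‖nzd a - nzd b‖ = Real.sqrt (2 - 2 * cosAngle a b) := by
  have hna : ‖nzd a‖ = 1 := by
    simp [nzd, norm_smul, Real.norm_eq_abs, abs_inv, abs_norm,
      inv_mul_cancel₀ (norm_ne_zero_iff.mpr ha)]
  have hnb : ‖nzd b‖ = 1 := by
    simp [nzd, norm_smul, Real.norm_eq_abs, abs_inv, abs_norm,
      inv_mul_cancel₀ (norm_ne_zero_iff.mpr hb)]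
  have hinner : (inner ℝ (nzd a) (nzd b) : ℝ) = cosAngle a b := by
    simp only [nzd, cosAngle, real_inner_smul_left, real_inner_smul_right]
    rw [div_eq_mul_inv, mul_inv]
    ring
  have hsq : ‖nzd a - nzd b‖ ^ 2 = 2 - 2 * cosAngle a b := by
    rw [norm_sub_sq_real, hna, hnb, hinner]; ring
  rw [← hsq, Real.sqrt_sq (norm_nonneg _)]

/-- Exactly balanced degrees preserve row angles.  If every cluster
has the same squared degree mass `τ > 0`, then the angle between mean-tensor rows equals
the angle between the corresponding core-tensor rows. -/
theorem balanced_degrees_preserve_angles {K p r : ℕ} (hK : 2 ≤ K)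
    (k0 : Fin K) (hk0 : (k0 : ℕ) = 0)
    (z : Fin p → Fin r) (hz : Function.Surjective z)
    (S : (Fin K → Fin r) → ℝ) (θ : Fin p → ℝ) (hθ : ∀ i, 0 < θ i)
    (τ : ℝ) (hτ : 0 < τ)
    (hbal : ∀ a : Fin r,
      ∑ i ∈ Finset.univ.filter (fun i => z i = a), (θ i) ^ 2 = τ)
    (i j : Fin p)
    (hi : matRow S k0 (z i) ≠ 0) (hj : matRow S k0 (z j) ≠ 0) :
    cosAngle (matRow (meanTensor z S θ) k0 i) (matRow (meanTensor z S θ) k0 j)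
        = cosAngle (matRow S k0 (z i)) (matRow S k0 (z j)) ∧
    ‖nzd (matRow (meanTensor z S θ) k0 i) - nzd (matRow (meanTensor z S θ) k0 j)‖
        = ‖nzd (matRow S k0 (z i)) - nzd (matRow S k0 (z j))‖ := by
  set m := Fintype.card {k : Fin K // k ≠ k0} with hm
  have hs : (0 : ℝ) < Real.sqrt (τ ^ m) := Real.sqrt_pos.mpr (by positivity)
  have hsq : Real.sqrt (τ ^ m) ^ 2 = τ ^ m := Real.sq_sqrt (by positivity)
  have hu : (0 : ℝ) < ‖matRow S k0 (z i)‖ := norm_pos_iff.mpr hi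
  have hv : (0 : ℝ) < ‖matRow S k0 (z j)‖ := norm_pos_iff.mpr hj
  have hni := norm_row k0 z S θ τ hτ hbal i (hθ i)
  have hnj := norm_row k0 z S θ τ hτ hbal j (hθ j)
  have hcos : cosAngle (matRow (meanTensor z S θ) k0 i) (matRow (meanTensor z S θ) k0 j)
      = cosAngle (matRow S k0 (z i)) (matRow S k0 (z j)) := by
    unfold cosAngle
    rw [inner_rows_s19 k0 z S θ τ hbal i j, hni, hnj]
    rw [div_eq_div_iff
      (mul_pos (mul_pos (mul_pos (hθ i) hs) hu) (mul_pos (mul_pos (hθ j) hs) hv)).ne'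
      (mul_pos hu hv).ne']
    conv_lhs => rw [← hsq]
    ring
  refine ⟨hcos, ?_⟩
  have hXi : matRow (meanTensor z S θ) k0 i ≠ 0 := by
    rw [← norm_pos_iff, hni]; exact mul_pos (mul_pos (hθ i) hs) hu
  have hXj : matRow (meanTensor z S θ) k0 j ≠ 0 := by
    rw [← norm_pos_iff, hnj]; exact mul_pos (mul_pos (hθ j) hs) hv
  rw [nzd_dist _ _ hXi hXj, nzd_dist _ _ hi hj, hcos]
end
end
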